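/- For every matrix X₀ ∈ Matrix(m,n,ℂ) and every pair of subsets I ⊆ {1,…,m}, J ⊆ {1,…,n} of equal cardinality r ≥ 1, there exists a map γ : ℂ → Matrix(m,n,ℂ) with γ(0) = X₀ which is an integral curve of the Hamiltonian Δ_{I,J} on all of ℂ, and such that each matrix entry evolves quasi-exponentially: for every (k,l) there exist an integer N ≥ 0, polynomials p, p₁, …, p_N ∈ ℂ[t] with deg p ≤ 2r−1 and deg p_a ≤ 2r−2 for a = 1,…,N, and nonzero complex numbers α₁, …, α_N, such that γ(t)_{kl} = p(t) + ∑_{a=1}^{N} p_a(t)·e^{α_a t} for all t ∈ ℂ. -/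

import Mathlib

open MvPolynomial

/-- The quadratic Poisson bracket on the polynomial algebra of the matrix affine
Poisson space `M_{m,n}`. -/
noncomputable def pois {m n : ℕ} (f g : MvPolynomial (Fin m × Fin n) ℂ) :
    MvPolynomial (Fin m × Fin n) ℂ :=
  ∑ i : Fin m, ∑ k : Fin m, ∑ j : Fin n, ∑ l : Fin n,
    (((k : ℤ) - (i : ℤ)).sign + ((l : ℤ) - (j : ℤ)).sign) •
      (X (i, l) * X (k, j) * pderiv (i, j) f * pderiv (k, l) g)

/-- The minor `Δ_{I,J}` (equal to `0` by convention if `|I| ≠ |J|`). -/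
noncomputable def Delta {m n : ℕ} (I : Finset (Fin m)) (J : Finset (Fin n)) :
    MvPolynomial (Fin m × Fin n) ℂ :=
  if h : J.card = I.card then
    Matrix.det (Matrix.of fun a b : Fin I.card =>
      X ((I.orderIsoOfFin rfl a).1, (J.orderIsoOfFin h b).1))
  else 0

/-- Evaluation of a polynomial at a matrix. -/
noncomputable def evalM {m n : ℕ} (Y : Matrix (Fin m) (Fin n) ℂ)
    (f : MvPolynomial (Fin m × Fin n) ℂ) : ℂ :=
  eval (fun p => Y p.1 p.2) f


noncomputable section AuxQE

/-- quasi-exponential: sum of `p_a(t) e^{α_a t}` with `deg p_a ≤ d` (exponents arbitrary). -/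
def QE (d : ℕ) (f : ℂ → ℂ) : Prop :=
  ∃ (N : ℕ) (q : Fin N → Polynomial ℂ) (α : Fin N → ℂ),
    (∀ a, (q a).natDegree ≤ d) ∧ ∀ t, f t = ∑ a, (q a).eval t * Complex.exp (α a * t)

lemma qe_zero (d : ℕ) : QE d (fun _ => 0) :=
  ⟨0, ![], ![], by simp, by simp⟩

lemma qe_single {d : ℕ} (p : Polynomial ℂ) (α : ℂ) (h : p.natDegree ≤ d) :
    QE d (fun t => p.eval t * Complex.exp (α * t)) :=
  ⟨1, ![p], ![α], by simpa using h, by simp⟩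

lemma qe_const (d : ℕ) (c : ℂ) : QE d (fun _ => c) := by
  have := qe_single (d := d) (Polynomial.C c) 0 (by simp)
  simpa using this

lemma qe_congr {d : ℕ} {f g : ℂ → ℂ} (h : ∀ t, f t = g t) (hf : QE d f) : QE d g := by
  obtain ⟨N, q, α, hq, hrep⟩ := hf
  exact ⟨N, q, α, hq, fun t => (h t).symm.trans (hrep t)⟩

lemma qe_add {d : ℕ} {f g : ℂ → ℂ} (hf : QE d f) (hg : QE d g) :
    QE d (fun t => f t + g t) := by
  obtain ⟨N₁, q₁, α₁, hq₁, h₁⟩ := hf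
  obtain ⟨N₂, q₂, α₂, hq₂, h₂⟩ := hg
  refine ⟨N₁ + N₂, Fin.append q₁ q₂, Fin.append α₁ α₂, ?_, ?_⟩
  · intro a
    refine Fin.addCases (fun i => ?_) (fun i => ?_) a
    · rw [Fin.append_left]; exact hq₁ i
    · rw [Fin.append_right]; exact hq₂ i
  · intro t
    show f t + g t = _
    rw [h₁ t, h₂ t, Fin.sum_univ_add]
    simp

lemma qe_sum {d : ℕ} {ι : Type*} (s : Finset ι) (f : ι → ℂ → ℂ)
    (h : ∀ i ∈ s, QE d (f i)) : QE d (fun t => ∑ i ∈ s, f i t) := by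
  classical
  induction s using Finset.induction_on with
  | empty => simpa using qe_zero d
  | insert a s hx ih =>
      have := qe_add (h a (by simp)) (ih fun i hi => h i (by simp [hi]))
      refine qe_congr (fun t => ?_) this
      rw [Finset.sum_insert hx]

end AuxQE

noncomputable section AuxQE2

lemma qe_mono {d d' : ℕ} (h : d ≤ d') {f : ℂ → ℂ} (hf : QE d f) : QE d' f := by
  obtain ⟨N, q, α, hq, hrep⟩ := hf
  exact ⟨N, q, α, fun a => (hq a).trans h, hrep⟩

lemma qe_mul {d e : ℕ} {f g : ℂ → ℂ} (hf : QE d f) (hg : QE e g) :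
    QE (d + e) (fun t => f t * g t) := by
  obtain ⟨N₁, q₁, α₁, hq₁, h₁⟩ := hf
  obtain ⟨N₂, q₂, α₂, hq₂, h₂⟩ := hg
  have : QE (d + e) (fun t => ∑ a : Fin N₁, ∑ b : Fin N₂,
      Polynomial.eval t (q₁ a * q₂ b) * Complex.exp ((α₁ a + α₂ b) * t)) := by
    refine qe_sum _ _ fun a _ => qe_sum _ _ fun b _ => qe_single _ _ ?_
    exact (Polynomial.natDegree_mul_le).trans (add_le_add (hq₁ a) (hq₂ b))
  refine qe_congr (fun t => ?_) this
  rw [h₁ t, h₂ t, Finset.sum_mul]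
  refine Finset.sum_congr rfl fun a _ => ?_
  rw [Finset.mul_sum]
  refine Finset.sum_congr rfl fun b _ => ?_
  rw [Polynomial.eval_mul, add_mul, Complex.exp_add]
  ring

lemma qe_const_mul {d : ℕ} (c : ℂ) {f : ℂ → ℂ} (hf : QE d f) :
    QE d (fun t => c * f t) := by
  have := qe_mul (qe_const 0 c) hf
  simpa using this

end AuxQE2
noncomputable section AuxAnti


lemma hasDerivAt_cexp (μ t : ℂ) :
    HasDerivAt (fun s : ℂ => Complex.exp (μ * s)) (μ * Complex.exp (μ * t)) t := by
  have h1 : HasDerivAt (fun s : ℂ => μ * s) (μ * 1) t := (hasDerivAt_id t).const_mul μ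
  have := (Complex.hasDerivAt_exp (μ * t)).comp t h1
  exact this.congr_deriv (by ring)

lemma eq_of_hasDerivAt_eq {f g d : ℂ → ℂ} (hf : ∀ t, HasDerivAt f (d t) t)
    (hg : ∀ t, HasDerivAt g (d t) t) (h0 : f 0 = g 0) (t : ℂ) : f t = g t := by
  have h : ∀ s, HasDerivAt (fun s => f s - g s) 0 s := fun s => by
    exact ((hf s).sub (hg s)).congr_deriv (sub_self _)
  have hc := is_const_of_deriv_eq_zero (𝕜 := ℂ) (f := fun s => f s - g s)
    (fun s => (h s).differentiableAt) (fun s => (h s).deriv) t 0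
  have : f t - g t = f 0 - g 0 := hc
  rw [h0] at this
  rw [sub_self] at this
  exact sub_eq_zero.mp this

/-- a polynomial antiderivative -/
def polyAnti (p : Polynomial ℂ) : Polynomial ℂ :=
  p.sum fun n a =>  Polynomial.C (a / (n + 1)) * Polynomial.X ^ (n + 1)

lemma polyAnti_deriv (p : Polynomial ℂ) : (polyAnti p).derivative = p := by
  unfold polyAnti
  rw [Polynomial.sum, map_sum]
  conv_rhs => rw [← Polynomial.sum_C_mul_X_pow_eq p, Polynomial.sum]
  refine Finset.sum_congr rfl fun n _ => ?_
  rw [Polynomial.derivative_C_mul_X_pow]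
  congr 1
  · congr 1
    push_cast
    exact div_mul_cancel₀ _ (Nat.cast_add_one_ne_zero n)

lemma polyAnti_natDegree (p : Polynomial ℂ) : (polyAnti p).natDegree ≤ p.natDegree + 1 := by
  unfold polyAnti
  rw [Polynomial.sum]
  refine Polynomial.natDegree_sum_le_of_forall_le _ _ fun n hn => ?_
  exact (Polynomial.natDegree_C_mul_X_pow_le _ _).trans (by
    have := Polynomial.le_natDegree_of_mem_supp n hn
    omega)

/-- antiderivative polynomial for `p e^{αt}`, `α ≠ 0`:  `Q' + αQ = p`. -/
def expAnti (α : ℂ) (p : Polynomial ℂ) : Polynomial ℂ :=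
  ∑ j ∈ Finset.range (p.natDegree + 1), ((-1 : ℂ) ^ j / α ^ (j + 1)) • Polynomial.derivative^[j] p

lemma expAnti_natDegree (α : ℂ) (p : Polynomial ℂ) : (expAnti α p).natDegree ≤ p.natDegree := by
  refine Polynomial.natDegree_sum_le_of_forall_le _ _ fun j _ => ?_
  exact (Polynomial.natDegree_smul_le _ _).trans ((Polynomial.natDegree_iterate_derivative _ _).trans (by omega))

lemma expAnti_spec (α : ℂ) (hα : α ≠ 0) (p : Polynomial ℂ) :
    Polynomial.derivative (expAnti α p) + Polynomial.C α * expAnti α p = p := by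
  unfold expAnti
  rw [map_sum, Finset.mul_sum, ← Finset.sum_add_distrib]
  have key : ∀ j, Polynomial.derivative (((-1 : ℂ) ^ j / α ^ (j + 1)) • Polynomial.derivative^[j] p)
      + Polynomial.C α * (((-1 : ℂ) ^ j / α ^ (j + 1)) • Polynomial.derivative^[j] p)
      = (((-1 : ℂ) ^ j / α ^ j) • Polynomial.derivative^[j] p)
        - (((-1 : ℂ) ^ (j+1) / α ^ (j+1)) • Polynomial.derivative^[j+1] p) := by
    intro j
    rw [Polynomial.derivative_smul]
    have hC : Polynomial.C α * (((-1 : ℂ) ^ j / α ^ (j + 1)) • Polynomial.derivative^[j] p)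
        = ((-1 : ℂ) ^ j / α ^ j) • Polynomial.derivative^[j] p := by
      rw [Polynomial.smul_eq_C_mul, Polynomial.smul_eq_C_mul, ← mul_assoc, ← map_mul]
      congr 2
      field_simp
      ring
    rw [hC]
    have : Polynomial.derivative (Polynomial.derivative^[j] p) = Polynomial.derivative^[j+1] p := by
      rw [Function.iterate_succ_apply']
    rw [this]
    have : (((-1 : ℂ) ^ j / α ^ (j + 1)) • Polynomial.derivative^[j+1] p)
        = -(((-1 : ℂ) ^ (j+1) / α ^ (j+1)) • Polynomial.derivative^[j+1] p) := by
      rw [← neg_smul]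
      congr 1
      ring
    rw [this]
    ring
  calc (∑ j ∈ Finset.range (p.natDegree + 1),
        (Polynomial.derivative (((-1 : ℂ) ^ j / α ^ (j + 1)) • Polynomial.derivative^[j] p)
          + Polynomial.C α * (((-1 : ℂ) ^ j / α ^ (j + 1)) • Polynomial.derivative^[j] p)))
      = ∑ j ∈ Finset.range (p.natDegree + 1),
        ((((-1 : ℂ) ^ j / α ^ j) • Polynomial.derivative^[j] p)
          - (((-1 : ℂ) ^ (j+1) / α ^ (j+1)) • Polynomial.derivative^[j+1] p)) :=
        Finset.sum_congr rfl fun j _ => key j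
    _ = (((-1 : ℂ) ^ 0 / α ^ 0) • Polynomial.derivative^[0] p)
          - (((-1 : ℂ) ^ (p.natDegree + 1) / α ^ (p.natDegree + 1)) • Polynomial.derivative^[p.natDegree + 1] p) := by
        exact Finset.sum_range_sub' (fun j => ((-1 : ℂ) ^ j / α ^ j) • Polynomial.derivative^[j] p) _
    _ = p := by
        rw [Polynomial.iterate_derivative_eq_zero (Nat.lt_succ_self _)]
        simp

end AuxAnti
noncomputable section AuxQEplus

/-- quasi-exponential normal form: polynomial part of degree ≤ dp plus exponential terms with
nonzero exponents and polynomial coefficients of degree ≤ dq. -/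
def QEplus (dp dq : ℕ) (F : ℂ → ℂ) : Prop :=
  ∃ (N : ℕ) (p : Polynomial ℂ) (q : Fin N → Polynomial ℂ) (α : Fin N → ℂ),
    p.natDegree ≤ dp ∧ (∀ a, (q a).natDegree ≤ dq) ∧ (∀ a, α a ≠ 0) ∧
    ∀ t, F t = Polynomial.eval t p + ∑ a, Polynomial.eval t (q a) * Complex.exp (α a * t)

lemma qeplus_add {dp dq : ℕ} {F G : ℂ → ℂ} (hF : QEplus dp dq F) (hG : QEplus dp dq G) :
    QEplus dp dq (fun t => F t + G t) := by
  obtain ⟨N₁, p₁, q₁, α₁, hp₁, hq₁, hα₁, h₁⟩ := hF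
  obtain ⟨N₂, p₂, q₂, α₂, hp₂, hq₂, hα₂, h₂⟩ := hG
  refine ⟨N₁ + N₂, p₁ + p₂, Fin.append q₁ q₂, Fin.append α₁ α₂, ?_, ?_, ?_, ?_⟩
  · exact (Polynomial.natDegree_add_le _ _).trans (max_le hp₁ hp₂)
  · intro a
    refine Fin.addCases (fun i => ?_) (fun i => ?_) a
    · rw [Fin.append_left]; exact hq₁ i
    · rw [Fin.append_right]; exact hq₂ i
  · intro a
    refine Fin.addCases (fun i => ?_) (fun i => ?_) a
    · rw [Fin.append_left]; exact hα₁ i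
    · rw [Fin.append_right]; exact hα₂ i
  · intro t
    show F t + G t = _
    rw [h₁ t, h₂ t, Fin.sum_univ_add]
    simp
    ring

lemma anti_single (d : ℕ) (p : Polynomial ℂ) (hp : p.natDegree ≤ d) (μ : ℂ) :
    ∃ F : ℂ → ℂ, F 0 = 0 ∧
      (∀ t, HasDerivAt F (Polynomial.eval t p * Complex.exp (μ * t)) t) ∧
      QEplus (d + 1) d F := by
  by_cases hμ : μ = 0
  · subst hμ
    refine ⟨fun t => Polynomial.eval t (polyAnti p) - Polynomial.eval 0 (polyAnti p),
      by simp, fun t => ?_, ?_⟩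
    · have h := ((polyAnti p).hasDerivAt t).sub_const (Polynomial.eval 0 (polyAnti p))
      rw [polyAnti_deriv] at h
      simpa using h
    · refine ⟨0, polyAnti p - Polynomial.C (Polynomial.eval 0 (polyAnti p)), ![], ![],
        ?_, by simp, by simp, fun t => by simp⟩
      exact (Polynomial.natDegree_sub_le _ _).trans
        (max_le ((polyAnti_natDegree p).trans (by omega)) (by simp))
  · set Q := expAnti μ p with hQ
    refine ⟨fun t => Polynomial.eval t Q * Complex.exp (μ * t) - Polynomial.eval 0 Q * Complex.exp (μ * 0),
      by simp, fun t => ?_, ?_⟩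
    · have h := ((Q.hasDerivAt t).mul (hasDerivAt_cexp μ t)).sub_const
        (Polynomial.eval 0 Q * Complex.exp (μ * 0))
      have hval : Polynomial.eval t (Polynomial.derivative Q) * Complex.exp (μ * t)
          + Polynomial.eval t Q * (μ * Complex.exp (μ * t))
          = Polynomial.eval t p * Complex.exp (μ * t) := by
        conv_rhs => rw [← expAnti_spec μ hμ p]
        simp only [Polynomial.eval_add, Polynomial.eval_mul, Polynomial.eval_C, ← hQ]
        ring
      rwa [hval] at h
    · refine ⟨1, Polynomial.C (-(Polynomial.eval 0 Q * Complex.exp (μ * 0))), ![Q], ![μ],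
        by simp, by simpa using expAnti_natDegree μ p |>.trans hp, by simpa using hμ, fun t => ?_⟩
      simp
      ring

lemma anti_of_qe {d : ℕ} {f : ℂ → ℂ} (hf : QE d f) :
    ∃ F : ℂ → ℂ, F 0 = 0 ∧ (∀ t, HasDerivAt F (f t) t) ∧ QEplus (d + 1) d F := by
  obtain ⟨N, q, α, hq, hrep⟩ := hf
  suffices h : ∀ (N : ℕ) (q : Fin N → Polynomial ℂ) (α : Fin N → ℂ),
      (∀ a, (q a).natDegree ≤ d) →
      ∃ F : ℂ → ℂ, F 0 = 0 ∧
        (∀ t, HasDerivAt F (∑ a, Polynomial.eval t (q a) * Complex.exp (α a * t)) t) ∧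
        QEplus (d + 1) d F by
    obtain ⟨F, h0, hd, hp⟩ := h N q α hq
    exact ⟨F, h0, fun t => by rw [hrep t]; exact hd t, hp⟩
  intro N
  induction N with
  | zero =>
      intro q α _
      exact ⟨fun _ => 0, rfl, fun t => by simpa using hasDerivAt_const t (0 : ℂ),
        ⟨0, 0, ![], ![], by simp, by simp, by simp, by simp⟩⟩
  | succ N ih =>
      intro q α hq
      obtain ⟨F₁, h₁0, h₁d, h₁p⟩ := anti_single d (q 0) (hq 0) (α 0)
      obtain ⟨F₂, h₂0, h₂d, h₂p⟩ := ih (fun i => q i.succ) (fun i => α i.succ) (fun i => hq i.succ)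
      refine ⟨fun t => F₁ t + F₂ t, by simp [h₁0, h₂0], fun t => ?_, qeplus_add h₁p h₂p⟩
      have := (h₁d t).add (h₂d t)
      rw [Fin.sum_univ_succ]
      exact this

end AuxQEplus
noncomputable section AuxODE

lemma solveLin {r : ℕ} (hr : 0 < r) (M : Matrix (Fin r) (Fin r) ℂ) (v : Fin r → ℂ) :
    ∃ w : ℂ → Fin r → ℂ,
      w 0 = v ∧
      (∀ t b, HasDerivAt (fun s => w s b) (M.mulVec (w t) b) t) ∧
      (∀ b, QE (r - 1) (fun t => w t b)) ∧
      (M.mulVec v = 0 → ∀ t, w t = v) := by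
  by_cases h0 : M.mulVec v = 0
  · refine ⟨fun _ => v, rfl, fun t b => ?_, fun b => qe_const _ _, fun _ _ => rfl⟩
    have hz : M.mulVec v b = 0 := by rw [h0]; rfl
    simpa [hz] using hasDerivAt_const t (v b)
  · set T : Module.End ℂ (Fin r → ℂ) := Matrix.mulVecLin M with hT
    have htop : v ∈ ⨆ μ : ℂ, T.maxGenEigenspace μ := by
      rw [Module.End.iSup_maxGenEigenspace_eq_top]; trivial
    obtain ⟨c, hc, hsum⟩ := (Submodule.mem_iSup_iff_exists_finsupp _ v).mp htop
    set y : ℂ → ℕ → Fin r → ℂ := fun μ j => ((T - μ • 1) ^ j) (c μ) with hy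
    have hy0 : ∀ μ, y μ 0 = c μ := fun μ => rfl
    have hysucc : ∀ μ j, y μ (j + 1) = (T - μ • 1) (y μ j) := by
      intro μ j
      show ((T - μ • 1) ^ (j + 1)) (c μ) = _
      rw [pow_succ']
      rfl
    have hyr : ∀ μ, y μ r = 0 := by
      intro μ
      have h1 : c μ ∈ T.maxGenEigenspace μ := hc μ
      rw [Module.End.maxGenEigenspace_eq_genEigenspace_finrank] at h1
      have h2 : Module.finrank ℂ (Fin r → ℂ) = r := Module.finrank_fin_fun ℂ
      rw [h2] at h1
      rw [Module.End.mem_genEigenspace_nat] at h1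
      exact h1
    have hTy : ∀ μ j, M.mulVec (y μ j) = y μ (j + 1) + μ • y μ j := by
      intro μ j
      rw [hysucc μ j]
      have : (T - μ • 1) (y μ j) = T (y μ j) - μ • y μ j := by
        simp [LinearMap.sub_apply, LinearMap.smul_apply]
      rw [this]
      have hTapp : T (y μ j) = M.mulVec (y μ j) := rfl
      rw [hTapp]
      abel
    set P : ℂ → Fin r → Polynomial ℂ := fun μ b =>
      ∑ j ∈ Finset.range r, Polynomial.C (y μ j b / (Nat.factorial j : ℂ)) * Polynomial.X ^ j
      with hP
    have hPeval : ∀ μ b t, Polynomial.eval t (P μ b)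
        = ∑ j ∈ Finset.range r, y μ j b / (Nat.factorial j : ℂ) * t ^ j := by
      intro μ b t
      rw [hP]
      simp [Polynomial.eval_finset_sum]
    set w : ℂ → Fin r → ℂ := fun t b =>
      ∑ μ ∈ c.support, Polynomial.eval t (P μ b) * Complex.exp (μ * t) with hw
    have hw0 : w 0 = v := by
      funext b
      show (∑ μ ∈ c.support, Polynomial.eval 0 (P μ b) * Complex.exp (μ * 0)) = v b
      have hv : ∀ μ, Polynomial.eval 0 (P μ b) = c μ b := by
        intro μ
        rw [hPeval]
        rw [Finset.sum_eq_single_of_mem 0 (Finset.mem_range.mpr hr)]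
        · simp [hy0]
        · intro j _ hj
          simp [zero_pow hj]
      simp only [hv, mul_comm, Complex.exp_zero, one_mul]
      have := congrFun hsum b
      rw [Finsupp.sum] at this
      simpa [Finset.sum_apply] using this
    refine ⟨w, hw0, ?_, ?_, fun h => absurd h h0⟩
    · intro t b
      have hterm : ∀ μ : ℂ, HasDerivAt (fun s => Polynomial.eval s (P μ b) * Complex.exp (μ * s))
          ((Polynomial.eval t (Polynomial.derivative (P μ b)) + μ * Polynomial.eval t (P μ b))
            * Complex.exp (μ * t)) t := by
        intro μ
        have h := ((P μ b).hasDerivAt t).mul (hasDerivAt_cexp μ t)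
        exact h.congr_deriv (by ring)
      have hsumd : HasDerivAt (fun s => w s b)
          (∑ μ ∈ c.support,
            (Polynomial.eval t (Polynomial.derivative (P μ b)) + μ * Polynomial.eval t (P μ b))
              * Complex.exp (μ * t)) t := by
        exact HasDerivAt.fun_sum (fun μ _ => hterm μ)
      have hval : (∑ μ ∈ c.support,
            (Polynomial.eval t (Polynomial.derivative (P μ b)) + μ * Polynomial.eval t (P μ b))
              * Complex.exp (μ * t)) = M.mulVec (w t) b := by
        have hkey : ∀ μ : ℂ, Polynomial.eval t (Polynomial.derivative (P μ b))
            + μ * Polynomial.eval t (P μ b)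
            = ∑ x, M b x * Polynomial.eval t (P μ x) := by
          intro μ
          have hD : Polynomial.eval t (Polynomial.derivative (P μ b))
              = ∑ j ∈ Finset.range r, y μ (j + 1) b / (Nat.factorial j : ℂ) * t ^ j := by
            rw [hP]
            rw [map_sum]
            simp only [Polynomial.derivative_C_mul_X_pow]
            rw [Polynomial.eval_finset_sum]
            simp only [Polynomial.eval_mul, Polynomial.eval_C, Polynomial.eval_pow,
              Polynomial.eval_X]
            obtain ⟨s, rfl⟩ : ∃ s, r = s + 1 := ⟨r - 1, by omega⟩
            rw [Finset.sum_range_succ', Finset.sum_range_succ, hyr]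
            simp only [Pi.zero_apply, zero_div, zero_mul, add_zero, Nat.cast_zero, mul_zero]
            refine Finset.sum_congr rfl fun j _ => ?_
            have hne : ((j : ℂ) + 1) ≠ 0 := Nat.cast_add_one_ne_zero j
            have hfacne : (Nat.factorial j : ℂ) ≠ 0 := by
              exact_mod_cast Nat.factorial_ne_zero j
            have hfac : (Nat.factorial (j + 1) : ℂ) = ((j : ℂ) + 1) * (Nat.factorial j : ℂ) := by
              rw [Nat.factorial_succ]
              push_cast
              ring
            have hpow : (j + 1 - 1) = j := by omega
            rw [hpow, hfac]
            push_cast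
            field_simp
          rw [hD, hPeval]
          rw [Finset.mul_sum, ← Finset.sum_add_distrib]
          have hR : ∀ x, M b x * Polynomial.eval t (P μ x)
              = ∑ j ∈ Finset.range r, M b x * (y μ j x / (Nat.factorial j : ℂ)) * t ^ j := by
            intro x
            rw [hPeval, Finset.mul_sum]
            exact Finset.sum_congr rfl fun j _ => by ring
          simp only [hR]
          rw [Finset.sum_comm]
          refine Finset.sum_congr rfl fun j _ => ?_
          have hmv : (∑ x, M b x * (y μ j x / (Nat.factorial j : ℂ)) * t ^ j)
              = (M.mulVec (y μ j) b) / (Nat.factorial j : ℂ) * t ^ j := by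
            rw [Matrix.mulVec, dotProduct, Finset.sum_div, Finset.sum_mul]
            exact Finset.sum_congr rfl fun x _ => by ring
          rw [hmv, hTy]
          simp only [Pi.add_apply, Pi.smul_apply, smul_eq_mul]
          ring
        rw [Matrix.mulVec, dotProduct]
        simp only [hw]
        simp only [Finset.mul_sum]
        rw [Finset.sum_comm]
        refine Finset.sum_congr rfl fun μ _ => ?_
        rw [hkey μ, Finset.sum_mul]
        refine Finset.sum_congr rfl fun x _ => by ring
      rw [← hval]
      exact hsumd
    · intro b
      refine qe_sum _ _ fun μ _ => qe_single _ _ ?_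
      refine Polynomial.natDegree_sum_le_of_forall_le _ _ fun j hj => ?_
      exact (Polynomial.natDegree_C_mul_X_pow_le _ _).trans
        (by have := Finset.mem_range.mp hj; omega)

end AuxODE
noncomputable section AuxSymb

lemma pderiv_finset_prod {σ : Type*} [DecidableEq σ] {ι : Type*} [DecidableEq ι] (i : σ)
    (s : Finset ι) (f : ι → MvPolynomial σ ℂ) :
    pderiv i (∏ j ∈ s, f j) = ∑ j ∈ s, (∏ k ∈ s.erase j, f k) * pderiv i (f j) := by
  classical
  induction s using Finset.induction_on with
  | empty => simp
  | insert a s hx ih =>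
      rw [Finset.prod_insert hx, pderiv_mul, ih, Finset.sum_insert hx,
        Finset.erase_insert hx, Finset.mul_sum]
      congr 1
      · exact mul_comm _ _
      · refine Finset.sum_congr rfl fun j hj => ?_
        rw [Finset.erase_insert_of_ne (by rintro rfl; exact hx hj),
          Finset.prod_insert (fun h => hx (Finset.mem_of_mem_erase h))]
        ring

variable {m n ρ : ℕ}

lemma pderiv_X_det (ι : Fin ρ → Fin m) (κ : Fin ρ → Fin n)
    (hι : Function.Injective ι) (hκ : Function.Injective κ) (a₀ b₀ : Fin ρ) :
    pderiv (ι a₀, κ b₀) (Matrix.det (Matrix.of fun a b : Fin ρ =>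
        (X (ι a, κ b) : MvPolynomial (Fin m × Fin n) ℂ)))
      = Matrix.det (Matrix.updateCol (Matrix.of fun a b : Fin ρ =>
          (X (ι a, κ b) : MvPolynomial (Fin m × Fin n) ℂ)) b₀ (Pi.single a₀ 1)) := by
  classical
  rw [Matrix.det_apply, Matrix.det_apply, map_sum]
  refine Finset.sum_congr rfl fun σ _ => ?_
  rw [Units.smul_def, Units.smul_def, map_zsmul, pderiv_finset_prod]
  congr 1
  rw [Finset.sum_eq_single b₀]
  · have hupd : ∀ i : Fin ρ, i ≠ b₀ →
        Matrix.updateCol (Matrix.of fun a b : Fin ρ =>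
          (X (ι a, κ b) : MvPolynomial (Fin m × Fin n) ℂ)) b₀ (Pi.single a₀ 1) (σ i) i
        = X (ι (σ i), κ i) := by
      intro i hi
      rw [Matrix.updateCol_apply, if_neg hi]
      rfl
    have hpd : pderiv (ι a₀, κ b₀) (X (ι (σ b₀), κ b₀) : MvPolynomial (Fin m × Fin n) ℂ)
        = if σ b₀ = a₀ then 1 else 0 := by
      rw [pderiv_X]
      rw [Pi.single_apply]
      congr 1
      simp only [Prod.mk.injEq, eq_iff_iff]
      constructor
      · rintro ⟨h1, _⟩; exact hι h1
      · rintro rfl; exact ⟨rfl, trivial⟩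
    simp only [Matrix.of_apply]
    rw [hpd]
    rw [← Finset.mul_prod_erase Finset.univ _ (Finset.mem_univ b₀)]
    rw [Matrix.updateCol_apply, if_pos rfl, Pi.single_apply]
    rw [Finset.prod_congr rfl fun i hi => hupd i (Finset.ne_of_mem_erase hi)]
    ring
  · intro b _ hb
    have : pderiv (ι a₀, κ b₀) (Matrix.of (fun a b : Fin ρ =>
        (X (ι a, κ b) : MvPolynomial (Fin m × Fin n) ℂ)) (σ b) b) = 0 := by
      refine pderiv_X_of_ne ?_
      intro hcontra
      exact hb (hκ (congrArg Prod.snd hcontra))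
    rw [this, mul_zero]
  · intro hmem
    exact absurd (Finset.mem_univ b₀) hmem

lemma pderiv_X_det_zero (ι : Fin ρ → Fin m) (κ : Fin ρ → Fin n) (p : Fin m × Fin n)
    (hp : ∀ a b : Fin ρ, (ι a, κ b) ≠ p) :
    pderiv p (Matrix.det (Matrix.of fun a b : Fin ρ =>
        (X (ι a, κ b) : MvPolynomial (Fin m × Fin n) ℂ))) = 0 := by
  classical
  rw [Matrix.det_apply, map_sum]
  refine Finset.sum_eq_zero fun σ _ => ?_
  rw [Units.smul_def, map_zsmul, pderiv_finset_prod]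
  have : ∀ b : Fin ρ, (∏ k ∈ Finset.univ.erase b, Matrix.of (fun a b : Fin ρ =>
      (X (ι a, κ b) : MvPolynomial (Fin m × Fin n) ℂ)) (σ k) k) *
      pderiv p (Matrix.of (fun a b : Fin ρ =>
      (X (ι a, κ b) : MvPolynomial (Fin m × Fin n) ℂ)) (σ b) b) = 0 := by
    intro b
    have : pderiv p (X (ι (σ b), κ b) : MvPolynomial (Fin m × Fin n) ℂ) = 0 :=
      pderiv_X_of_ne (hp (σ b) b)
    show _ * pderiv p (X (ι (σ b), κ b) : MvPolynomial (Fin m × Fin n) ℂ) = 0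
    rw [this, mul_zero]
  rw [Finset.sum_congr rfl fun b _ => this b]
  simp

end AuxSymb
noncomputable section AuxPois

variable {m n : ℕ}

lemma pois_X (k : Fin m) (l : Fin n) (g : MvPolynomial (Fin m × Fin n) ℂ) :
    pois (X (k, l)) g = ∑ k' : Fin m, ∑ l' : Fin n,
      (((k' : ℤ) - (k : ℤ)).sign + ((l' : ℤ) - (l : ℤ)).sign) •
        (X (k, l') * X (k', l) * pderiv (k', l') g) := by
  unfold pois
  have step1 : ∀ (i : Fin m) (k' : Fin m) (j : Fin n) (l' : Fin n),
      (((k' : ℤ) - (i : ℤ)).sign + ((l' : ℤ) - (j : ℤ)).sign) •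
        (X (i, l') * X (k', j) * pderiv (i, j) (X (k, l)) * pderiv (k', l') g)
      = if i = k then (if j = l then
          (((k' : ℤ) - (k : ℤ)).sign + ((l' : ℤ) - (l : ℤ)).sign) •
            (X (k, l') * X (k', l) * pderiv (k', l') g) else 0) else 0 := by
    intro i k' j l'
    rw [pderiv_X, Pi.single_apply]
    by_cases hik : i = k
    · subst hik
      by_cases hjl : j = l
      · subst hjl
        simp [mul_comm]
      · rw [if_neg (fun h => hjl ((congrArg Prod.snd h).symm)), if_pos rfl, if_neg hjl]
        simp
    · rw [if_neg (fun h => hik ((congrArg Prod.fst h).symm)), if_neg hik]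
      simp
  simp only [step1]
  simp [Finset.sum_ite_irrel, Finset.sum_ite_eq', Finset.sum_const_zero]

end AuxPois
noncomputable section AuxEval

variable {m n : ℕ}

lemma evalM_pois_X_Delta (I : Finset (Fin m)) (J : Finset (Fin n)) (h : J.card = I.card)
    (Y : Matrix (Fin m) (Fin n) ℂ) (k : Fin m) (l : Fin n) :
    evalM Y (pois (X (k, l)) (Delta I J)) =
      ∑ a : Fin I.card, ∑ b : Fin I.card,
        ((((((I.orderIsoOfFin rfl a).1 : ℤ) - (k : ℤ)).sign
          + ((((J.orderIsoOfFin h b).1 : ℤ)) - (l : ℤ)).sign : ℤ) : ℂ)) *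
          (Y k (J.orderIsoOfFin h b).1 * (Y (I.orderIsoOfFin rfl a).1 l *
          (Matrix.adjugate (Matrix.of fun a b : Fin I.card =>
            Y (I.orderIsoOfFin rfl a).1 (J.orderIsoOfFin h b).1)) b a)) := by
  classical
  set ι : Fin I.card → Fin m := fun a => (I.orderIsoOfFin rfl a).1 with hιdef
  set κ : Fin I.card → Fin n := fun b => (J.orderIsoOfFin h b).1 with hκdef
  have hι : Function.Injective ι := fun a a' hh => (I.orderIsoOfFin rfl).injective (Subtype.ext hh)
  have hκ : Function.Injective κ := fun b b' hh => (J.orderIsoOfFin h).injective (Subtype.ext hh)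
  have hDelta : Delta I J = Matrix.det (Matrix.of fun a b : Fin I.card =>
      (X (ι a, κ b) : MvPolynomial (Fin m × Fin n) ℂ)) := by
    rw [Delta, dif_pos h]
  have hzero : ∀ (k' : Fin m) (l' : Fin n), k' ∉ I ∨ l' ∉ J →
      pderiv (k', l') (Delta I J) = 0 := by
    intro k' l' hkl
    rw [hDelta]
    refine pderiv_X_det_zero ι κ (k', l') ?_
    intro a b hab
    have h1 : ι a = k' := congrArg Prod.fst hab
    have h2 : κ b = l' := congrArg Prod.snd hab
    rcases hkl with hk | hl
    · exact hk (h1 ▸ (I.orderIsoOfFin rfl a).2)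
    · exact hl (h2 ▸ (J.orderIsoOfFin h b).2)
  have hcof : ∀ a b : Fin I.card,
      eval (fun p : Fin m × Fin n => Y p.1 p.2) (pderiv (ι a, κ b) (Delta I J))
      = (Matrix.adjugate (Matrix.of fun a b : Fin I.card => Y (ι a) (κ b))) b a := by
    intro a b
    rw [hDelta, pderiv_X_det ι κ hι hκ a b]
    rw [RingHom.map_det]
    have hmap : (Matrix.updateCol (Matrix.of fun a b : Fin I.card =>
          (X (ι a, κ b) : MvPolynomial (Fin m × Fin n) ℂ)) b (Pi.single a 1)).map
          (eval fun p : Fin m × Fin n => Y p.1 p.2)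
        = Matrix.updateCol (Matrix.of fun a b : Fin I.card => Y (ι a) (κ b)) b
            (Pi.single a 1) := by
      ext a' b'
      rw [Matrix.map_apply, Matrix.updateCol_apply, Matrix.updateCol_apply]
      by_cases hb : b' = b
      · rw [if_pos hb, if_pos hb]
        rcases eq_or_ne a' a with rfl | hx
        · simp
        · simp [Pi.single_eq_of_ne hx]
      · rw [if_neg hb, if_neg hb]
        simp [eval_X]
    rw [RingHom.mapMatrix_apply, hmap]
    rw [← Matrix.det_transpose, ← Matrix.updateRow_transpose, ← Matrix.adjugate_apply,
      ← Matrix.adjugate_transpose]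
    rfl
  rw [pois_X]
  show eval (fun p : Fin m × Fin n => Y p.1 p.2) _ = _
  rw [map_sum]
  have hterm : ∀ (k' : Fin m) (l' : Fin n),
      eval (fun p : Fin m × Fin n => Y p.1 p.2)
        ((((k' : ℤ) - (k : ℤ)).sign + ((l' : ℤ) - (l : ℤ)).sign) •
          (X (k, l') * X (k', l) * pderiv (k', l') (Delta I J)))
      = ((((k' : ℤ) - (k : ℤ)).sign + ((l' : ℤ) - (l : ℤ)).sign : ℤ) : ℂ) *
        (Y k l' * (Y k' l *
          eval (fun p : Fin m × Fin n => Y p.1 p.2) (pderiv (k', l') (Delta I J)))) := by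
    intro k' l'
    rw [map_zsmul, zsmul_eq_mul]
    simp only [map_mul, eval_X]
    ring
  have hrw : (∑ k' : Fin m, eval (fun p : Fin m × Fin n => Y p.1 p.2)
      (∑ l' : Fin n, (((k' : ℤ) - (k : ℤ)).sign + ((l' : ℤ) - (l : ℤ)).sign) •
          (X (k, l') * X (k', l) * pderiv (k', l') (Delta I J))))
      = ∑ k' : Fin m, ∑ l' : Fin n,
        ((((k' : ℤ) - (k : ℤ)).sign + ((l' : ℤ) - (l : ℤ)).sign : ℤ) : ℂ) *
        (Y k l' * (Y k' l *
          eval (fun p : Fin m × Fin n => Y p.1 p.2) (pderiv (k', l') (Delta I J)))) := by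
    refine Finset.sum_congr rfl fun k' _ => ?_
    rw [map_sum]
    exact Finset.sum_congr rfl fun l' _ => hterm k' l'
  rw [hrw]
  set G : Fin m → Fin n → ℂ := fun k' l' =>
    ((((k' : ℤ) - (k : ℤ)).sign + ((l' : ℤ) - (l : ℤ)).sign : ℤ) : ℂ) *
      (Y k l' * (Y k' l *
        eval (fun p : Fin m × Fin n => Y p.1 p.2) (pderiv (k', l') (Delta I J)))) with hG
  have hGzero : ∀ k' l', k' ∉ I ∨ l' ∉ J → G k' l' = 0 := by
    intro k' l' hkl
    rw [hG]
    simp only [hzero k' l' hkl, map_zero, mul_zero]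
  have step1 : (∑ k' : Fin m, ∑ l' : Fin n, G k' l') = ∑ k' ∈ I, ∑ l' ∈ J, G k' l' := by
    rw [← Finset.sum_subset (Finset.subset_univ I) (fun x _ hx => by
      refine Finset.sum_eq_zero fun l' _ => hGzero x l' (Or.inl hx))]
    refine Finset.sum_congr rfl fun k' _ => ?_
    rw [← Finset.sum_subset (Finset.subset_univ J) (fun x _ hx => hGzero k' x (Or.inr hx))]
  rw [step1]
  have hreI : ∀ (f : Fin m → ℂ), (∑ x ∈ I, f x) = ∑ a : Fin I.card, f (ι a) := by
    intro f
    rw [← Finset.sum_coe_sort I f]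
    exact (Equiv.sum_comp (I.orderIsoOfFin rfl).toEquiv (fun x : ↥I => f x.1)).symm
  have hreJ : ∀ (f : Fin n → ℂ), (∑ x ∈ J, f x) = ∑ b : Fin I.card, f (κ b) := by
    intro f
    rw [← Finset.sum_coe_sort J f]
    exact (Equiv.sum_comp (J.orderIsoOfFin h).toEquiv (fun x : ↥J => f x.1)).symm
  rw [hreI]
  refine Finset.sum_congr rfl fun a _ => ?_
  rw [hreJ]
  refine Finset.sum_congr rfl fun b _ => ?_
  show G (ι a) (κ b) = _
  simp only [hG]
  rw [hcof a b]

end AuxEval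

/-- **Completeness of determinantal Hamiltonian flows, with quasi-exponential dynamics.**
There is a global integral curve of `Δ_{I,J}` through any `X₀`, and each matrix entry
evolves as `p(t) + ∑ₐ pₐ(t) e^{αₐ t}` with `deg p ≤ 2r−1`, `deg pₐ ≤ 2r−2`, `αₐ ≠ 0`. -/
theorem determinantal_flow_complete_quasiExponential (m n : ℕ) (hm : 0 < m) (hn : 0 < n)
    (r : ℕ) (hr : 1 ≤ r)
    (X₀ : Matrix (Fin m) (Fin n) ℂ)
    (I : Finset (Fin m)) (J : Finset (Fin n))
    (hI : I.card = r) (hJ : J.card = r) :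
    ∃ γ : ℂ → Matrix (Fin m) (Fin n) ℂ,
      γ 0 = X₀ ∧
      (∀ (k : Fin m) (l : Fin n) (t : ℂ),
        HasDerivAt (fun s => γ s k l)
          (evalM (γ t) (pois (X (k, l)) (Delta I J))) t) ∧
      (∀ (k : Fin m) (l : Fin n),
        ∃ (N : ℕ) (p : Polynomial ℂ) (q : Fin N → Polynomial ℂ) (α : Fin N → ℂ),
          p.natDegree ≤ 2 * r - 1 ∧
          (∀ a, (q a).natDegree ≤ 2 * r - 2) ∧
          (∀ a, α a ≠ 0) ∧
          ∀ t : ℂ, γ t k l = p.eval t + ∑ a, (q a).eval t * Complex.exp (α a * t)) := by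
  classical
  have hJI : J.card = I.card := hJ.trans hI.symm
  have hρpos : 0 < I.card := by omega
  set ι : Fin I.card → Fin m := fun a => (I.orderIsoOfFin rfl a).1 with hιdef
  set κ : Fin I.card → Fin n := fun b => (J.orderIsoOfFin hJI b).1 with hκdef
  set A : Matrix (Fin I.card) (Fin I.card) ℂ :=
    Matrix.of (fun a b => X₀ (ι a) (κ b)) with hA
  set Cf : Matrix (Fin I.card) (Fin I.card) ℂ := fun a b => A.adjugate b a with hCf
  set sg : Fin I.card → Fin m → ℂ := fun a k => ((((ι a : Fin m) : ℤ) - (k : ℤ)).sign : ℂ)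
    with hsg
  set sg' : Fin I.card → Fin n → ℂ := fun b l => ((((κ b : Fin n) : ℤ) - (l : ℤ)).sign : ℂ)
    with hsg'
  have hsg0 : ∀ a, sg a (ι a) = 0 := by
    intro a; rw [hsg]; simp
  have hsg'0 : ∀ b, sg' b (κ b) = 0 := by
    intro b; rw [hsg']; simp
  set L : Fin m → Matrix (Fin I.card) (Fin I.card) ℂ :=
    fun k => fun b c => ∑ a, A a b * sg a k * Cf a c with hL
  set R : Fin n → Matrix (Fin I.card) (Fin I.card) ℂ :=
    fun l => fun a c => ∑ b, A a b * sg' b l * Cf c b with hR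
  -- adjugate identities
  have hCA : ∀ c b, (∑ a, Cf a c * A a b) = if c = b then A.det else 0 := by
    intro c b
    have h1 : (A.adjugate * A) c b = (A.det • (1 : Matrix (Fin I.card) (Fin I.card) ℂ)) c b := by
      rw [Matrix.adjugate_mul]
    rw [Matrix.mul_apply] at h1
    simp only [Matrix.smul_apply, Matrix.one_apply, smul_eq_mul] at h1
    rw [hCf]
    simp only []
    rw [h1]
    split_ifs <;> simp
  have hAC : ∀ c a, (∑ b, A c b * Cf a b) = if c = a then A.det else 0 := by
    intro c a
    have h1 : (A * A.adjugate) c a = (A.det • (1 : Matrix (Fin I.card) (Fin I.card) ℂ)) c a := by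
      rw [Matrix.mul_adjugate]
    rw [Matrix.mul_apply] at h1
    simp only [Matrix.smul_apply, Matrix.one_apply, smul_eq_mul] at h1
    rw [hCf]
    simp only []
    rw [h1]
    split_ifs <;> simp
  -- the solutions of the two families of linear ODEs
  choose w hw0 hwd hwqe hwconst using
    fun k : Fin m => solveLin hρpos (L k) (fun b => X₀ k (κ b))
  choose u hu0 hud huqe huconst using
    fun l : Fin n => solveLin hρpos (R l) (fun a => X₀ (ι a) l)
  -- constancy on the distinguished rows/columns
  have hwI : ∀ (a : Fin I.card) (t : ℂ), w (ι a) t = fun b => X₀ (ι a) (κ b) := by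
    intro a t
    refine hwconst (ι a) ?_ t
    funext b
    rw [Matrix.mulVec, dotProduct]
    have : ∀ c, L (ι a) b c * X₀ (ι a) (κ c)
        = ∑ a', A a' b * sg a' (ι a) * Cf a' c * A a c := by
      intro c
      rw [hL]
      simp only []
      rw [Finset.sum_mul]
      exact Finset.sum_congr rfl fun a' _ => by rw [hA]; simp only [Matrix.of_apply]
    rw [Finset.sum_congr rfl fun c _ => this c]
    rw [Finset.sum_comm]
    have hinner : ∀ a', (∑ c, A a' b * sg a' (ι a) * Cf a' c * A a c)
        = A a' b * sg a' (ι a) * (if a = a' then A.det else 0) := by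
      intro a'
      rw [← hAC a a', Finset.mul_sum]
      exact Finset.sum_congr rfl fun c _ => by ring
    rw [Finset.sum_congr rfl fun a' _ => hinner a']
    rw [Finset.sum_eq_single_of_mem a (Finset.mem_univ a)
      (fun a' _ ha' => by rw [if_neg (fun hh => ha' hh.symm), mul_zero])]
    rw [hsg0 a]
    simp
  have huJ : ∀ (b : Fin I.card) (t : ℂ), u (κ b) t = fun a => X₀ (ι a) (κ b) := by
    intro b t
    refine huconst (κ b) ?_ t
    funext a
    rw [Matrix.mulVec, dotProduct]
    have : ∀ a', R (κ b) a a' * X₀ (ι a') (κ b)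
        = ∑ b', A a b' * sg' b' (κ b) * Cf a' b' * A a' b := by
      intro a'
      rw [hR]
      simp only []
      rw [Finset.sum_mul]
      exact Finset.sum_congr rfl fun b' _ => by rw [hA]; simp only [Matrix.of_apply]
    rw [Finset.sum_congr rfl fun a' _ => this a']
    rw [Finset.sum_comm]
    have hinner : ∀ b', (∑ a', A a b' * sg' b' (κ b) * Cf a' b' * A a' b)
        = A a b' * sg' b' (κ b) * (if b' = b then A.det else 0) := by
      intro b'
      rw [← hCA b' b, Finset.mul_sum]
      exact Finset.sum_congr rfl fun a' _ => by ring
    rw [Finset.sum_congr rfl fun b' _ => hinner b']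
    rw [Finset.sum_eq_single_of_mem b (Finset.mem_univ b)
      (fun b' _ hb' => by rw [if_neg hb', mul_zero])]
    rw [hsg'0 b]
    simp
  -- the vector field along the constructed slices
  set f : Fin m → Fin n → ℂ → ℂ := fun k l t =>
    ∑ a, ∑ b, (sg a k + sg' b l) * (Cf a b * (u l t a * w k t b)) with hfdef
  have hfqe : ∀ k l, QE (2 * r - 2) (f k l) := by
    intro k l
    rw [hfdef]
    refine qe_sum _ _ fun a _ => qe_sum _ _ fun b _ => ?_
    have h1 : QE ((I.card - 1) + (I.card - 1)) (fun t => u l t a * w k t b) :=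
      qe_mul (huqe l a) (hwqe k b)
    have h2 := qe_const_mul ((sg a k + sg' b l) * Cf a b) (qe_mono (by omega : (I.card - 1) + (I.card - 1) ≤ 2 * r - 2) h1)
    refine qe_congr (fun t => ?_) h2
    ring
  -- key algebraic identities for consistency
  have hf_col : ∀ (k : Fin m) (b : Fin I.card) (t : ℂ),
      f k (κ b) t = ((L k).mulVec (w k t)) b := by
    intro k b t
    rw [hfdef]
    simp only []
    rw [Matrix.mulVec, dotProduct]
    have hu' : ∀ a, u (κ b) t a = A a b := by
      intro a; rw [huJ b t, hA]; simp only [Matrix.of_apply]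
    have hsplit : ∀ a c, (sg a k + sg' c (κ b)) * (Cf a c * (u (κ b) t a * w k t c))
        = A a b * sg a k * Cf a c * w k t c + sg' c (κ b) * (Cf a c * A a b) * w k t c := by
      intro a c
      rw [hu' a]
      ring
    rw [Finset.sum_congr rfl fun a _ => Finset.sum_congr rfl fun c _ => hsplit a c]
    rw [Finset.sum_congr rfl fun a (_ : a ∈ Finset.univ) => Finset.sum_add_distrib]
    rw [Finset.sum_add_distrib]
    have hS2 : (∑ a, ∑ c, sg' c (κ b) * (Cf a c * A a b) * w k t c) = 0 := by
      rw [Finset.sum_comm]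
      have : ∀ c, (∑ a, sg' c (κ b) * (Cf a c * A a b) * w k t c)
          = sg' c (κ b) * (if c = b then A.det else 0) * w k t c := by
        intro c
        rw [← hCA c b, Finset.mul_sum, Finset.sum_mul]
        all_goals exact Finset.sum_congr rfl fun a _ => by ring
      rw [Finset.sum_congr rfl fun c _ => this c]
      rw [Finset.sum_eq_single_of_mem b (Finset.mem_univ b)
        (fun c _ hc => by rw [if_neg hc, mul_zero, zero_mul])]
      rw [hsg'0 b]
      simp
    rw [hS2, add_zero]
    rw [Finset.sum_comm]
    refine Finset.sum_congr rfl fun c _ => ?_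
    rw [hL]
    simp only []
    rw [Finset.sum_mul]
    all_goals exact Finset.sum_congr rfl fun a _ => by ring
  have hf_row : ∀ (l : Fin n) (a : Fin I.card) (t : ℂ),
      f (ι a) l t = ((R l).mulVec (u l t)) a := by
    intro l a t
    rw [hfdef]
    simp only []
    rw [Matrix.mulVec, dotProduct]
    have hw' : ∀ c, w (ι a) t c = A a c := by
      intro c; rw [hwI a t, hA]; simp only [Matrix.of_apply]
    have hsplit : ∀ a' c, (sg a' (ι a) + sg' c l) * (Cf a' c * (u l t a' * w (ι a) t c))
        = sg a' (ι a) * (A a c * Cf a' c) * u l t a'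
          + A a c * sg' c l * Cf a' c * u l t a' := by
      intro a' c
      rw [hw' c]
      ring
    rw [Finset.sum_congr rfl fun a' _ => Finset.sum_congr rfl fun c _ => hsplit a' c]
    rw [Finset.sum_congr rfl fun a' (_ : a' ∈ Finset.univ) => Finset.sum_add_distrib]
    rw [Finset.sum_add_distrib]
    have hS1 : (∑ a', ∑ c, sg a' (ι a) * (A a c * Cf a' c) * u l t a') = 0 := by
      have : ∀ a', (∑ c, sg a' (ι a) * (A a c * Cf a' c) * u l t a')
          = sg a' (ι a) * (if a = a' then A.det else 0) * u l t a' := by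
        intro a'
        rw [← hAC a a', Finset.mul_sum, Finset.sum_mul]
        all_goals exact Finset.sum_congr rfl fun c _ => by ring
      rw [Finset.sum_congr rfl fun a' _ => this a']
      rw [Finset.sum_eq_single_of_mem a (Finset.mem_univ a)
        (fun a' _ ha' => by rw [if_neg (fun hh => ha' hh.symm), mul_zero, zero_mul])]
      rw [hsg0 a]
      simp
    rw [hS1, zero_add]
    refine Finset.sum_congr rfl fun a' _ => ?_
    rw [hR]
    simp only []
    rw [Finset.sum_mul]
    all_goals exact Finset.sum_congr rfl fun c _ => by ring
  -- antiderivatives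
  choose F hF0 hFd hFqe using fun (k : Fin m) (l : Fin n) => anti_of_qe (hfqe k l)
  set γ : ℂ → Matrix (Fin m) (Fin n) ℂ :=
    fun t => Matrix.of fun k l => X₀ k l + F k l t with hγ
  have hγ0 : γ 0 = X₀ := by
    funext k l
    rw [hγ]
    simp only [Matrix.of_apply]
    rw [hF0 k l, add_zero]
  have hγd : ∀ k l t, HasDerivAt (fun s => γ s k l) (f k l t) t := by
    intro k l t
    have := (hFd k l t).const_add (X₀ k l)
    simpa [hγ] using this
  -- consistency with the linear solutions
  have hcol : ∀ (k : Fin m) (b : Fin I.card) (t : ℂ), γ t k (κ b) = w k t b := by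
    intro k b t
    refine eq_of_hasDerivAt_eq (f := fun s => γ s k (κ b)) (g := fun s => w k s b) (d := fun s => f k (κ b) s)
      (fun s => hγd k (κ b) s) (fun s => ?_) ?_ t
    · show HasDerivAt (fun s' => w k s' b) (f k (κ b) s) s
      rw [hf_col k b s]
      exact hwd k s b
    · show γ 0 k (κ b) = w k 0 b
      rw [hγ0, hw0 k]
  have hrow : ∀ (l : Fin n) (a : Fin I.card) (t : ℂ), γ t (ι a) l = u l t a := by
    intro l a t
    refine eq_of_hasDerivAt_eq (f := fun s => γ s (ι a) l) (g := fun s => u l s a) (d := fun s => f (ι a) l s)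
      (fun s => hγd (ι a) l s) (fun s => ?_) ?_ t
    · show HasDerivAt (fun s' => u l s' a) (f (ι a) l s) s
      rw [hf_row l a s]
      exact hud l s a
    · show γ 0 (ι a) l = u l 0 a
      rw [hγ0, hu0 l]
  have hAconst : ∀ (t : ℂ) (a b : Fin I.card), γ t (ι a) (κ b) = A a b := by
    intro t a b
    rw [hcol (ι a) b t, hwI a t, hA]
    simp only [Matrix.of_apply]
  -- the Hamiltonian vector field evaluated along γ is f
  have hODE : ∀ k l t, evalM (γ t) (pois (X (k, l)) (Delta I J)) = f k l t := by
    intro k l t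
    rw [evalM_pois_X_Delta I J hJI (γ t) k l]
    have hmat : (Matrix.of fun a b : Fin I.card =>
        γ t (I.orderIsoOfFin rfl a).1 (J.orderIsoOfFin hJI b).1) = A := by
      ext a b
      exact hAconst t a b
    rw [hfdef]
    simp only []
    refine Finset.sum_congr rfl fun a _ => ?_
    refine Finset.sum_congr rfl fun b _ => ?_
    rw [hmat]
    have h1 : γ t k (J.orderIsoOfFin hJI b).1 = w k t b := hcol k b t
    have h2 : γ t (I.orderIsoOfFin rfl a).1 l = u l t a := hrow l a t
    rw [h1, h2]
    rw [hsg, hsg', hCf]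
    push_cast
    ring
  refine ⟨γ, hγ0, ?_, ?_⟩
  · intro k l t
    rw [hODE k l t]
    exact hγd k l t
  · intro k l
    obtain ⟨N, p, q, α, hp, hq, hα, hrep⟩ := hFqe k l
    refine ⟨N, p + Polynomial.C (X₀ k l), q, α, ?_, hq, hα, fun t => ?_⟩
    · refine (Polynomial.natDegree_add_le _ _).trans (max_le (hp.trans (by omega)) (by simp))
    · rw [hγ]
      simp only [Matrix.of_apply]
      rw [hrep t]
      rw [Polynomial.eval_add, Polynomial.eval_C]
      ring
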